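/- Let μ, σ ∈ ℝ with σ > 0, and let f be the Gaussian density with mean μ and variance σ². Define R̄₁(x) = f(x) + f(−x) − 2f(0). Then R̄₁(x) < 0 for all x > 0 if and only if μ² ≤ σ². -/

import Mathlib

open Real

lemma my_cosh_lt_exp_half_sq {x : ℝ} (hx : x ≠ 0) : Real.cosh x < Real.exp (x ^ 2 / 2) := by
  rw [Real.cosh_eq_tsum, Real.exp_eq_exp_ℝ, NormedSpace.exp_eq_tsum ℝ]
  refine Summable.tsum_lt_tsum_of_nonneg (i := 2)
    (fun n => div_nonneg ((even_two_mul n).pow_nonneg x) (by positivity)) (fun n => ?_) ?_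
    (NormedSpace.expSeries_summable' (x ^ 2 / 2))
  · simp only [div_pow, pow_mul, smul_eq_mul, inv_mul_eq_div, div_div]
    gcongr
    norm_cast
    exact Nat.two_pow_mul_factorial_le_factorial_two_mul _
  · simp only [div_pow, pow_mul, smul_eq_mul, inv_mul_eq_div, div_div]
    have h4 : 0 < (x ^ 2) ^ 2 := by positivity
    rw [div_lt_div_iff₀ (by norm_num [Nat.factorial]) (by norm_num [Nat.factorial])]
    norm_num [Nat.factorial]
    nlinarith [h4]

lemma my_one_add_le_cosh (x : ℝ) : 1 + x ^ 2 / 2 ≤ Real.cosh x := by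
  have h := Summable.sum_le_tsum (Finset.range 2)
    (fun i _ => div_nonneg ((even_two_mul i).pow_nonneg x) (by positivity))
    x.hasSum_cosh.summable
  rw [x.hasSum_cosh.tsum_eq] at h
  simpa [Finset.sum_range_succ, Nat.factorial] using h

lemma my_key (μ σ : ℝ) (hσ : 0 < σ) (x : ℝ) :
    ((1 / Real.sqrt (2 * π * σ ^ 2)) * Real.exp (-(x - μ) ^ 2 / (2 * σ ^ 2))
      + (1 / Real.sqrt (2 * π * σ ^ 2)) * Real.exp (-(-x - μ) ^ 2 / (2 * σ ^ 2))
      - 2 * ((1 / Real.sqrt (2 * π * σ ^ 2)) * Real.exp (-(0 - μ) ^ 2 / (2 * σ ^ 2))) < 0)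
    ↔ Real.cosh (μ * x / σ ^ 2) < Real.exp (x ^ 2 / (2 * σ ^ 2)) := by
  have hπ := Real.pi_pos
  have hc : 0 < 1 / Real.sqrt (2 * π * σ ^ 2) := by positivity
  set c := 1 / Real.sqrt (2 * π * σ ^ 2)
  have hσ2 : (σ:ℝ) ^ 2 ≠ 0 := by positivity
  have e1 : Real.exp (-(x - μ) ^ 2 / (2 * σ ^ 2))
      = Real.exp (-(0 - μ) ^ 2 / (2 * σ ^ 2)) * Real.exp (-(x ^ 2) / (2 * σ ^ 2))
        * Real.exp (μ * x / σ ^ 2) := by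
    rw [← Real.exp_add, ← Real.exp_add]
    congr 1
    field_simp
    ring
  have e2 : Real.exp (-(-x - μ) ^ 2 / (2 * σ ^ 2))
      = Real.exp (-(0 - μ) ^ 2 / (2 * σ ^ 2)) * Real.exp (-(x ^ 2) / (2 * σ ^ 2))
        * Real.exp (-(μ * x / σ ^ 2)) := by
    rw [← Real.exp_add, ← Real.exp_add]
    congr 1
    field_simp
    ring
  rw [e1, e2]
  set E := Real.exp (-(0 - μ) ^ 2 / (2 * σ ^ 2)) with hE
  set s := Real.exp (-(x ^ 2) / (2 * σ ^ 2)) with hs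
  have hEpos : 0 < E := Real.exp_pos _
  have hspos : 0 < s := Real.exp_pos _
  have hinv : Real.exp (x ^ 2 / (2 * σ ^ 2)) * s = 1 := by
    rw [hs, ← Real.exp_add]
    have : x ^ 2 / (2 * σ ^ 2) + -x ^ 2 / (2 * σ ^ 2) = 0 := by ring
    rw [this, Real.exp_zero]
  rw [Real.cosh_eq]
  set A := Real.exp (μ * x / σ ^ 2)
  set B := Real.exp (-(μ * x / σ ^ 2))
  set G := Real.exp (x ^ 2 / (2 * σ ^ 2))
  have factor : c * (E * s * A) + c * (E * s * B) - 2 * (c * E)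
      = (c * E) * (s * (A + B) - 2) := by ring
  rw [factor]
  constructor
  · intro h
    have ht : s * (A + B) - 2 < 0 := by
      by_contra hge
      push_neg at hge
      nlinarith [mul_pos hc hEpos]
    nlinarith [hspos, hinv]
  · intro h
    have h2 := mul_lt_mul_of_pos_left h hspos
    exact mul_neg_of_pos_of_neg (mul_pos hc hEpos) (by nlinarith [hinv])

theorem stmt12 (μ σ : ℝ) (hσ : 0 < σ) :
    (∀ x > (0:ℝ),
      (1 / Real.sqrt (2 * π * σ ^ 2)) * Real.exp (-(x - μ) ^ 2 / (2 * σ ^ 2))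
      + (1 / Real.sqrt (2 * π * σ ^ 2)) * Real.exp (-(-x - μ) ^ 2 / (2 * σ ^ 2))
      - 2 * ((1 / Real.sqrt (2 * π * σ ^ 2)) * Real.exp (-(0 - μ) ^ 2 / (2 * σ ^ 2))) < 0)
    ↔ μ ^ 2 ≤ σ ^ 2 := by
  constructor
  · intro h
    by_contra hlt
    push_neg at hlt
    set d := μ ^ 2 - σ ^ 2 with hd
    have hdpos : 0 < d := by simp [hd]; linarith
    set x := Real.sqrt (min (2 * σ ^ 2) (8 * d / 3)) with hxdef
    have hx : 0 < x := Real.sqrt_pos.mpr (lt_min (by positivity) (by positivity))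
    have hx2 : x ^ 2 = min (2 * σ ^ 2) (8 * d / 3) :=
      Real.sq_sqrt (le_min (by positivity) (by positivity))
    have hx2a : x ^ 2 ≤ 2 * σ ^ 2 := hx2 ▸ min_le_left _ _
    have hx2b : x ^ 2 ≤ 8 * d / 3 := hx2 ▸ min_le_right _ _
    have h1 := (my_key μ σ hσ x).mp (h x hx)
    have hA : 1 + μ ^ 2 * x ^ 2 / (2 * σ ^ 4) ≤ Real.cosh (μ * x / σ ^ 2) := by
      have := my_one_add_le_cosh (μ * x / σ ^ 2)
      have heq : (μ * x / σ ^ 2) ^ 2 / 2 = μ ^ 2 * x ^ 2 / (2 * σ ^ 4) := by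
        field_simp
      linarith [heq ▸ this]
    have hy0 : 0 ≤ x ^ 2 / (2 * σ ^ 2) := by positivity
    have hy1 : x ^ 2 / (2 * σ ^ 2) ≤ 1 := by
      rw [div_le_one (by positivity)]; linarith
    have hB : Real.exp (x ^ 2 / (2 * σ ^ 2))
        ≤ 1 + x ^ 2 / (2 * σ ^ 2) + 3 / 4 * (x ^ 2 / (2 * σ ^ 2)) ^ 2 := by
      have := Real.exp_bound' hy0 hy1 (n := 2) (by norm_num)
      simp [Finset.sum_range_succ, Nat.factorial] at this
      linarith
    have hσ4 : (0:ℝ) < σ ^ 4 := by positivity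
    have hcontr : 1 + μ ^ 2 * x ^ 2 / (2 * σ ^ 4)
        < 1 + x ^ 2 / (2 * σ ^ 2) + 3 / 4 * (x ^ 2 / (2 * σ ^ 2)) ^ 2 := by
      linarith
    have hc2 : μ ^ 2 * x ^ 2 / (2 * σ ^ 4) < x ^ 2 / (2 * σ ^ 2) + 3 / 4 * (x ^ 2 / (2 * σ ^ 2)) ^ 2 := by
      linarith
    rw [div_lt_iff₀ (by positivity : (0:ℝ) < 2 * σ ^ 4)] at hc2
    have e3 : (x ^ 2 / (2 * σ ^ 2)) ^ 2 * (2 * σ ^ 4) = x ^ 4 / 2 := by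
      field_simp
    have e4 : x ^ 2 / (2 * σ ^ 2) * (2 * σ ^ 4) = x ^ 2 * σ ^ 2 := by
      field_simp
    rw [add_mul, mul_assoc, e3, e4] at hc2
    nlinarith [mul_le_mul_of_nonneg_left hx2b (sq_nonneg x), hdpos]
  · intro hμ x hx
    apply (my_key μ σ hσ x).mpr
    have habs : |μ| ≤ σ := by
      nlinarith [sq_abs μ, abs_nonneg μ]
    calc Real.cosh (μ * x / σ ^ 2) ≤ Real.cosh (x / σ) := by
          apply Real.cosh_le_cosh.mpr
          rw [abs_div, abs_mul, abs_div, abs_of_pos hx, abs_of_pos hσ, abs_of_pos (pow_pos hσ 2),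
            div_le_div_iff₀ (by positivity) hσ]
          nlinarith [mul_le_mul_of_nonneg_right (mul_le_mul_of_nonneg_right habs hx.le) hσ.le]
      _ < Real.exp ((x / σ) ^ 2 / 2) := my_cosh_lt_exp_half_sq (by positivity)
      _ = Real.exp (x ^ 2 / (2 * σ ^ 2)) := by congr 1; field_simp
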